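/- Let p be an odd prime and Q a finite quasisimple group (Q equals its own commutator subgroup and the quotient of Q by its center is a simple group) with center Z. Assume that either the order of Z is not divisible by p, or the index in Aut(Q) of the subgroup of inner automorphisms of Q is not divisible by p. Let P be a Sylow p-subgroup of Q and let x ∈ P commute with every element of P. Then there exists y ∈ Q with y * x⁻¹ ∈ Z, such that the order of y is a power of p, and such that every automorphism f of Q satisfying f(x) * x⁻¹ ∈ Z fixes y, i.e., f(y) = y. -/

import Mathlib

section Aux

variable {Q : Type*} [Group Q]

private lemma aux_center_apply (f : MulAut Q) {z : Q} (hz : z ∈ Subgroup.center Q) :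
    f z ∈ Subgroup.center Q := by
  rw [Subgroup.mem_center_iff] at hz ⊢
  intro g
  calc g * f z = f (f.symm g * z) := by rw [map_mul, MulEquiv.apply_symm_apply]
    _ = f (z * f.symm g) := by rw [hz]
    _ = f z * g := by rw [map_mul, MulEquiv.apply_symm_apply]

private lemma aux_conj_normal : ((MulAut.conj (G := Q)).range).Normal := by
  constructor
  rintro f ⟨q, rfl⟩ g
  refine ⟨g q, ?_⟩
  ext y
  simp [MulAut.conj_apply, MulAut.mul_apply, map_mul, map_inv, MulAut.inv_def]

private lemma aux_order_one {G : Type*} [Group G] {p : ℕ} (hp : p.Prime) {u : G} {n M : ℕ}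
    (h1 : orderOf u ∣ p ^ n) (h2 : orderOf u ∣ M) (hM : ¬ p ∣ M) : u = 1 := by
  obtain ⟨j, -, hj⟩ := (Nat.dvd_prime_pow hp).mp h1
  rcases Nat.eq_zero_or_pos j with hj0 | hj0
  · rw [hj0, pow_zero] at hj
    exact orderOf_eq_one_iff.mp hj
  · exact absurd (dvd_trans (hj ▸ dvd_pow_self p hj0.ne') h2) hM

private lemma aux_inner_fixes [Finite Q] (p : ℕ) [Fact p.Prime] (P : Sylow p Q) (x : Q)
    (hxP : x ∈ (P : Subgroup Q)) (hxZ : ∀ w ∈ (P : Subgroup Q), x * w = w * x)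
    {q : Q} (hq : q * x * q⁻¹ * x⁻¹ ∈ Subgroup.center Q) : q * x * q⁻¹ = x := by
  -- the subgroup H of elements commuting with x modulo the center
  let H : Subgroup Q :=
  { carrier := {a : Q | a * x * a⁻¹ * x⁻¹ ∈ Subgroup.center Q}
    one_mem' := by simpa using Subgroup.one_mem (Subgroup.center Q)
    mul_mem' := by
      intro a b ha hb
      simp only [Set.mem_setOf_eq] at ha hb ⊢
      have hcomm := Subgroup.mem_center_iff.mp hb a
      have key : a * b * x * (a * b)⁻¹ * x⁻¹
          = (b * x * b⁻¹ * x⁻¹) * (a * x * a⁻¹ * x⁻¹) := by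
        rw [show a * b * x * (a * b)⁻¹ * x⁻¹
            = (a * (b * x * b⁻¹ * x⁻¹)) * (x * a⁻¹ * x⁻¹) by group, hcomm]
        group
      rw [key]
      exact Subgroup.mul_mem _ hb ha
    inv_mem' := by
      intro a ha
      simp only [Set.mem_setOf_eq] at ha ⊢
      have h1 : (a * x * a⁻¹ * x⁻¹)⁻¹ ∈ Subgroup.center Q := Subgroup.inv_mem _ ha
      have hcomm := Subgroup.mem_center_iff.mp h1 a⁻¹
      rw [show a⁻¹ * x * a⁻¹⁻¹ * x⁻¹ = a⁻¹ * (a * x * a⁻¹ * x⁻¹)⁻¹ * a by group, hcomm,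
        inv_mul_cancel_right]
      exact h1 }
  have memH : ∀ a : Q, a ∈ H ↔ a * x * a⁻¹ * x⁻¹ ∈ Subgroup.center Q := fun a => Iff.rfl
  -- the homomorphism c : H → Z
  let c : H →* Subgroup.center Q :=
  { toFun := fun a => ⟨(a : Q) * x * (a : Q)⁻¹ * x⁻¹, a.2⟩
    map_one' := by ext; simp
    map_mul' := by
      intro a b
      have hb : ((b : Q) * x * (b : Q)⁻¹ * x⁻¹) ∈ Subgroup.center Q := b.2
      have hcomm := Subgroup.mem_center_iff.mp hb (a : Q)
      ext
      push_cast
      rw [show (a : Q) * b * x * ((a : Q) * b)⁻¹ * x⁻¹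
          = ((a : Q) * ((b : Q) * x * (b : Q)⁻¹ * x⁻¹)) * (x * (a : Q)⁻¹ * x⁻¹) by group,
        hcomm]
      rw [show (b:Q) * x * (b:Q)⁻¹ * x⁻¹ * (a:Q) * (x * (a:Q)⁻¹ * x⁻¹)
          = ((b:Q) * x * (b:Q)⁻¹ * x⁻¹) * ((a:Q) * x * (a:Q)⁻¹ * x⁻¹) by group]
      exact Subgroup.mem_center_iff.mp a.2 _ }
  -- P ≤ H and P ≤ ker c
  have hPH : (P : Subgroup Q) ≤ H := by
    intro w hw
    rw [memH, show w * x * w⁻¹ * x⁻¹ = 1 by rw [← hxZ w hw]; group]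
    exact Subgroup.one_mem _
  have hPker : (P : Subgroup Q).subgroupOf H ≤ c.ker := by
    intro w hw
    rw [Subgroup.mem_subgroupOf] at hw
    rw [MonoidHom.mem_ker]
    ext
    show (w : Q) * x * (w : Q)⁻¹ * x⁻¹ = 1
    rw [← hxZ w hw]; group
  -- p does not divide the index of ker c
  have hk1 : c.ker.index ∣ ((P : Subgroup Q).subgroupOf H).index :=
    Subgroup.index_dvd_of_le hPker
  have hk2 : ((P : Subgroup Q).subgroupOf H).index ∣ (P : Subgroup Q).index :=
    Subgroup.relIndex_dvd_index_of_le hPH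
  have hpker : ¬ p ∣ c.ker.index := fun h => P.not_dvd_index (h.trans (hk1.trans hk2))
  -- order of c q is a p-power
  obtain ⟨N, hN⟩ := P.2 ⟨x, hxP⟩
  have hxN : x ^ (p ^ N) = 1 := by
    have := congrArg (Subtype.val) hN
    push_cast at this
    exact this
  set u : Subgroup.center Q := c ⟨q, hq⟩ with hu
  have hcu := Subgroup.mem_center_iff.mp hq
  have hcomm : Commute (q * x * q⁻¹) x⁻¹ := by
    have h1 := hcu x⁻¹
    show (q * x * q⁻¹) * x⁻¹ = x⁻¹ * (q * x * q⁻¹)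
    rw [show x⁻¹ * (q * x * q⁻¹) = x⁻¹ * (q * x * q⁻¹ * x⁻¹) * x by group, h1,
      inv_mul_cancel_right]
  have hupow : u ^ (p ^ N) = 1 := by
    ext
    push_cast
    show ((q * x * q⁻¹) * x⁻¹) ^ (p ^ N) = 1
    rw [hcomm.mul_pow, conj_pow, inv_pow, hxN]
    simp
  have huM : orderOf u ∣ c.ker.index := by
    have h2 : Nat.card c.range = c.ker.index := by
      rw [Subgroup.index]
      exact (Nat.card_congr (QuotientGroup.quotientKerEquivRange c).toEquiv).symm
    rw [← h2]
    have h1 := orderOf_injective c.range.subtype Subtype.coe_injective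
      (⟨u, ⟨⟨q, hq⟩, hu.symm⟩⟩ : c.range)
    calc orderOf u = orderOf (⟨u, ⟨⟨q, hq⟩, hu.symm⟩⟩ : c.range) := h1
      _ ∣ Nat.card c.range := orderOf_dvd_natCard _
  have hu1 : u = 1 := aux_order_one (Fact.out : p.Prime) (orderOf_dvd_of_pow_eq_one hupow)
    huM hpker
  have : q * x * q⁻¹ * x⁻¹ = 1 := congrArg Subtype.val hu1
  calc q * x * q⁻¹ = (q * x * q⁻¹ * x⁻¹) * x := by group
    _ = x := by rw [this, one_mul]

end Aux

/-- For an odd prime `p` and a finite quasisimple group `Q` with center `Z`, if `p` does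
not divide `|Z|` or `p` does not divide `|Out(Q)|`, then for any `x ∈ Z(P)` with `P` a
Sylow `p`-subgroup there exists a `p`-element `y ∈ xZ` fixed by every automorphism `f` of
`Q` with `[f, x] ≤ Z`. -/
theorem quasisimple_easy_case
    (p : ℕ) (hp : p.Prime) (hodd : Odd p)
    (Q : Type*) [Group Q] [Finite Q]
    (hperf : commutator Q = ⊤)
    (hsimple : IsSimpleGroup (Q ⧸ Subgroup.center Q))
    (hcase : ¬ p ∣ Nat.card (Subgroup.center Q) ∨
      ¬ p ∣ (MulAut.conj (G := Q)).range.index)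
    (P : Sylow p Q) (x : Q) (hxP : x ∈ (P : Subgroup Q))
    (hxZ : ∀ w ∈ (P : Subgroup Q), x * w = w * x) :
    ∃ y : Q, y * x⁻¹ ∈ Subgroup.center Q ∧ (∃ n : ℕ, orderOf y = p ^ n) ∧
      ∀ f : MulAut Q, f x * x⁻¹ ∈ Subgroup.center Q → f y = y := by
  haveI : Fact p.Prime := ⟨hp⟩
  obtain ⟨N, hN⟩ := P.2 ⟨x, hxP⟩
  have hxN : x ^ (p ^ N) = 1 := by
    have := congrArg (Subtype.val) hN
    push_cast at this
    exact this
  have hordx : orderOf x ∣ p ^ N := orderOf_dvd_of_pow_eq_one hxN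
  obtain ⟨k, -, hk⟩ := (Nat.dvd_prime_pow hp).mp hordx
  rcases hcase with hcase | hcase
  · -- p does not divide |Z| : take y = x
    refine ⟨x, by simp [Subgroup.one_mem], ⟨k, hk⟩, ?_⟩
    intro f hf
    have hz := hf
    have hfx : f x = (f x * x⁻¹) * x := by group
    have hc := Subgroup.mem_center_iff.mp hz
    have hzpow : (f x * x⁻¹) ^ (p ^ N) = 1 := by
      have hcomm : Commute (f x * x⁻¹) x := ((hc x).symm : _)
      have : ((f x * x⁻¹) * x) ^ (p ^ N) = (f x * x⁻¹) ^ (p ^ N) * x ^ (p ^ N) :=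
        hcomm.mul_pow _
      rw [← hfx, ← map_pow, hxN, map_one, mul_one] at this
      exact this.symm
    have hdvd : orderOf (f x * x⁻¹) ∣ Nat.card (Subgroup.center Q) := by
      calc orderOf (f x * x⁻¹)
          = orderOf (⟨f x * x⁻¹, hz⟩ : Subgroup.center Q) :=
            orderOf_injective (Subgroup.center Q).subtype Subtype.coe_injective
              ⟨f x * x⁻¹, hz⟩
        _ ∣ Nat.card (Subgroup.center Q) := orderOf_dvd_natCard _
    have h1 : f x * x⁻¹ = 1 :=
      aux_order_one hp (orderOf_dvd_of_pow_eq_one hzpow) hdvd hcase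
    exact mul_inv_eq_one.mp h1
  · -- p does not divide |Out(Q)|
    by_cases hx1 : x = 1
    · subst hx1
      exact ⟨1, by simpa using Subgroup.one_mem _, ⟨0, by simp⟩, fun f _ => by simp⟩
    -- the subgroup A of automorphisms moving x by a central element
    let A : Subgroup (MulAut Q) :=
    { carrier := {f : MulAut Q | f x * x⁻¹ ∈ Subgroup.center Q}
      one_mem' := by simp [Subgroup.one_mem]
      mul_mem' := by
        intro f g hf hg
        simp only [Set.mem_setOf_eq, MulAut.mul_apply] at *
        rw [show f (g x) * x⁻¹ = f (g x * x⁻¹) * (f x * x⁻¹) by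
          rw [map_mul, map_inv]; group]
        exact Subgroup.mul_mem _ (aux_center_apply f hg) hf
      inv_mem' := by
        intro f hf
        simp only [Set.mem_setOf_eq] at *
        have h1 : f⁻¹ (f x * x⁻¹) ∈ Subgroup.center Q := aux_center_apply f⁻¹ hf
        have h2 : f⁻¹ x * x⁻¹ = (f⁻¹ (f x * x⁻¹))⁻¹ := by
          rw [map_mul, map_inv]
          have : f⁻¹ (f x) = x := by simp
          rw [this]
          group
        rw [h2]
        exact Subgroup.inv_mem _ h1 }
    have memA : ∀ f : MulAut Q, f ∈ A ↔ f x * x⁻¹ ∈ Subgroup.center Q := fun f => Iff.rfl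
    -- inner automorphisms in A fix x
    have hinner : ∀ a : MulAut Q, a ∈ (MulAut.conj (G := Q)).range → a ∈ A → a x = x := by
      rintro a ⟨q, rfl⟩ ha
      rw [memA, MulAut.conj_apply] at ha
      have : q * x * q⁻¹ * x⁻¹ ∈ Subgroup.center Q := ha
      rw [MulAut.conj_apply]
      exact aux_inner_fixes p P x hxP hxZ this
    let A₀ : Subgroup A := ((MulAut.conj (G := Q)).range).subgroupOf A
    -- the value map, constant on left cosets of A₀
    have valmem : ∀ f : A, x⁻¹ * (f : MulAut Q) x ∈ Subgroup.center Q := by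
      intro f
      have hf : (f : MulAut Q) x * x⁻¹ ∈ Subgroup.center Q := f.2
      have hc := Subgroup.mem_center_iff.mp hf x⁻¹
      rw [show x⁻¹ * (f : MulAut Q) x = x⁻¹ * ((f : MulAut Q) x * x⁻¹) * x by group, hc,
        inv_mul_cancel_right]
      exact hf
    let val : A → Subgroup.center Q := fun f => ⟨x⁻¹ * (f : MulAut Q) x, valmem f⟩
    have hval : ∀ f g : A, (QuotientGroup.leftRel A₀) f g → val f = val g := by
      intro f g hfg
      rw [QuotientGroup.leftRel_apply] at hfg
      rw [Subgroup.mem_subgroupOf] at hfg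
      have h1 : ((f⁻¹ * g : A) : MulAut Q) x = x :=
        hinner _ hfg (SetLike.coe_mem _)
      have h2 : (g : MulAut Q) x = (f : MulAut Q) x := by
        have h3 : (f : MulAut Q) * ((f⁻¹ * g : A) : MulAut Q) = (g : MulAut Q) := by
          push_cast
          group
        calc (g : MulAut Q) x = ((f : MulAut Q) * ((f⁻¹ * g : A) : MulAut Q)) x := by
              rw [h3]
          _ = (f : MulAut Q) (((f⁻¹ * g : A) : MulAut Q) x) := MulAut.mul_apply _ _ _ _
          _ = (f : MulAut Q) x := by rw [h1]
      ext
      show x⁻¹ * (f : MulAut Q) x = x⁻¹ * (g : MulAut Q) x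
      rw [h2]
    let F : A ⧸ A₀ → Subgroup.center Q := Quotient.lift val hval
    have hF : ∀ f : A, F (QuotientGroup.mk f) = val f := fun f => rfl
    haveI : Fintype (A ⧸ A₀) := Fintype.ofFinite _
    set n : ℕ := Nat.card (A ⧸ A₀) with hn_def
    have hncard : n = Fintype.card (A ⧸ A₀) := Nat.card_eq_fintype_card
    -- p does not divide n
    haveI : ((MulAut.conj (G := Q)).range).Normal := aux_conj_normal
    have hpn : ¬ p ∣ n := by
      intro hdvd
      have h1 : n = ((MulAut.conj (G := Q)).range).relIndex A := rfl
      exact hcase (hdvd.trans (h1 ▸ Subgroup.relIndex_dvd_index_of_normal _ _))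
    letI : CommGroup (Subgroup.center Q) :=
      { (inferInstance : Group (Subgroup.center Q)) with
        mul_comm := fun a b => Subtype.ext (Subgroup.mem_center_iff.mp b.2 a) }
    set w : Subgroup.center Q := ∏ c : A ⧸ A₀, F c with hw_def
    have hwcentral := Subgroup.mem_center_iff.mp w.2
    -- key commutation facts
    have hfxeq : ∀ f : A, (f : MulAut Q) x = x * (val f : Q) := by
      intro f
      show (f : MulAut Q) x = x * (x⁻¹ * (f : MulAut Q) x)
      group
    -- each F c has p-power order
    have hFpow : ∀ c : A ⧸ A₀, F c ^ (p ^ N) = 1 := by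
      intro c
      induction c using Quotient.inductionOn with
      | h f =>
        rw [hF]
        ext
        push_cast
        show (x⁻¹ * (f : MulAut Q) x) ^ (p ^ N) = 1
        have hcomm : Commute x⁻¹ ((f : MulAut Q) x) := by
          have := Subgroup.mem_center_iff.mp (valmem f)
          rw [hfxeq f]
          have hc : Commute x (val f : Q) :=
            (Subgroup.mem_center_iff.mp (val f).2 x)
          exact Commute.inv_left (Commute.mul_right (Commute.refl x) hc)
        rw [hcomm.mul_pow, inv_pow, ← map_pow, hxN, map_one]
        simp
    -- invariance of π := x^n * w under A
    set π : Q := x ^ n * (w : Q) with hπ_def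
    have hπfix : ∀ f : A, (f : MulAut Q) π = π := by
      intro f
      -- restriction of f to the center
      let fZ : Subgroup.center Q →* Subgroup.center Q :=
      { toFun := fun z => ⟨(f : MulAut Q) (z : Q), aux_center_apply _ z.2⟩
        map_one' := by ext; simp
        map_mul' := by intro a b; ext; push_cast; rw [map_mul] }
      have hfZ : ∀ z : Subgroup.center Q, ((fZ z : Q)) = (f : MulAut Q) (z : Q) :=
        fun z => rfl
      -- reindexing
      have hre : ∀ c : A ⧸ A₀, F (f • c) = val f * fZ (F c) := by
        intro c
        induction c using Quotient.inductionOn with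
        | h g =>
          have hsmul : f • (QuotientGroup.mk g : A ⧸ A₀) = QuotientGroup.mk (f * g) := rfl
          rw [hsmul, hF, hF]
          ext
          push_cast
          show x⁻¹ * ((f * g : MulAut Q)) x
            = (x⁻¹ * (f : MulAut Q) x) * ((f : MulAut Q) (x⁻¹ * (g : MulAut Q) x))
          rw [MulAut.mul_apply, show (g : MulAut Q) x = x * (x⁻¹ * (g : MulAut Q) x) by group,
            map_mul]
          group
      have hprod : w = val f ^ n * fZ w := by
        calc w = ∏ c : A ⧸ A₀, F c := hw_def
          _ = ∏ c : A ⧸ A₀, F (f • c) := by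
              refine (Fintype.prod_bijective (fun c => f • c)
                (MulAction.bijective f) _ _ (fun c => rfl)).symm
          _ = ∏ c : A ⧸ A₀, (val f * fZ (F c)) := by
              exact Finset.prod_congr rfl (fun c _ => hre c)
          _ = val f ^ n * fZ w := by
              rw [Finset.prod_mul_distrib, Finset.prod_const, ← map_prod, ← hw_def,
                Finset.card_univ, hncard]
      have hfw : (f : MulAut Q) (w : Q) = ((val f : Q) ^ n)⁻¹ * (w : Q) := by
        have := congrArg (Subtype.val) hprod
        push_cast at this
        rw [← hfZ]
        rw [this]
        group
      rw [hπ_def, map_mul, map_pow, hfxeq f, hfw]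
      have hc : Commute x (val f : Q) := Subgroup.mem_center_iff.mp (val f).2 x
      rw [hc.mul_pow n]
      group
    -- π has p-power order
    have hwpow : w ^ (p ^ N) = 1 := by
      rw [hw_def, ← Finset.prod_pow]
      exact Finset.prod_eq_one (fun c _ => hFpow c)
    have hcxw : Commute x (w : Q) := Subgroup.mem_center_iff.mp w.2 x
    have hπpow : π ^ (p ^ N) = 1 := by
      rw [hπ_def, ((hcxw.pow_left n).mul_pow _), ← pow_mul, mul_comm n, pow_mul, hxN,
        one_pow, one_mul]
      have := congrArg (Subtype.val) hwpow
      push_cast at this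
      exact this
    -- find the p'-inverse m of n modulo orderOf x
    have hordx0 : orderOf x ≠ 0 := (orderOf_pos x).ne'
    have hordx1 : orderOf x ≠ 1 := fun h => hx1 (orderOf_eq_one_iff.mp h)
    have hordx_pos : 1 < orderOf x := by omega
    have hcop : (orderOf x).Coprime n := by
      rw [hk]
      exact Nat.Coprime.pow_left k (hp.coprime_iff_not_dvd.mpr hpn)
    obtain ⟨m, -, hm⟩ := Nat.exists_mul_mod_eq_one_of_coprime hcop.symm hordx_pos
    -- the element y
    refine ⟨π ^ m, ?_, ?_, ?_⟩
    · have hy : π ^ m = x ^ (n * m) * ((w : Q)) ^ m := by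
        rw [hπ_def, (hcxw.pow_left n).mul_pow, ← pow_mul]
      have hxnm : x ^ (n * m) = x := by
        rw [← pow_mod_orderOf, hm, pow_one]
      rw [hy, hxnm]
      have hwm : ((w : Q)) ^ m ∈ Subgroup.center Q := Subgroup.pow_mem _ w.2 m
      have hc := Subgroup.mem_center_iff.mp hwm x
      rw [hc, mul_inv_cancel_right]
      exact hwm
    · have hypow : (π ^ m) ^ (p ^ N) = 1 := by
        rw [← pow_mul, mul_comm m, pow_mul, hπpow, one_pow]
      obtain ⟨j, -, hj⟩ := (Nat.dvd_prime_pow hp).mp (orderOf_dvd_of_pow_eq_one hypow)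
      exact ⟨j, hj⟩
    · intro f hf
      have hfA : f ∈ A := hf
      rw [map_pow]
      rw [hπfix ⟨f, hfA⟩]
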